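/- Let x = x(n), y = y(n), and the sequences 𝒞 = 𝒞(n) depend on a parameter n → ∞, with c = c(n) = max_i c_i, and suppose c ≪ y and x ≪ y. Then there is a constant K such that for all sufficiently large n, at the end of the (𝒞,x,y)-process, with probability at least 1 − exp(−x/(20c)), X(t_r) ≤ K · x · t_r / y. -/

import Mathlib

open Filter MeasureTheory
open scoped Topology

noncomputable section

attribute [local instance] Classical.propDecidable

/-- `t_q = x + y + c_1 + ⋯ + c_q` (with `c` indexed from `0`). -/
def tseq (c : ℕ → ℕ) (x y : ℕ) (q : ℕ) : ℕ := x + y + ∑ i ∈ Finset.range q, c i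

/-- The `(𝒞,x,y)`-process, driven by a sequence `u` of uniform random numbers:
with probability `X(t_q)/t_q` the `(q+1)`-st weight goes to `X`. -/
def Xproc (c : ℕ → ℕ) (x y : ℕ) (u : ℕ → ℝ) : ℕ → ℕ
  | 0 => x
  | q + 1 =>
      Xproc c x y u q +
        if u q < (Xproc c x y u q : ℝ) / (tseq c x y q : ℝ) then c q else 0

/-- The uniform distribution on the unit interval. -/
def unif : Measure ℝ := volume.restrict (Set.Icc 0 1)

/-- The driving randomness: `r` independent uniform random numbers. -/
def procMeasure (r : ℕ) : Measure (Fin r → ℝ) := Measure.pi fun _ => unif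

/-- The `(𝒞,x,y)`-process on the sample space `Fin r → ℝ`. -/
def XprocFin {r : ℕ} (c : ℕ → ℕ) (x y : ℕ) (ω : Fin r → ℝ) (q : ℕ) : ℕ :=
  Xproc c x y (fun i => if h : i < r then ω ⟨i, h⟩ else 0) q

end

noncomputable section

attribute [local instance] Classical.propDecidable

variable (C : ℕ → ℕ) (x y : ℕ)

instance : IsProbabilityMeasure unif := by
  constructor
  rw [unif, Measure.restrict_apply_univ, Real.volume_Icc]
  norm_num

instance (r : ℕ) : IsProbabilityMeasure (procMeasure r) := by
  rw [procMeasure]; infer_instance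

variable (C : ℕ → ℕ) (x y : ℕ)

lemma tseq_mono {q q' : ℕ} (h : q ≤ q') : tseq C x y q ≤ tseq C x y q' := by
  unfold tseq
  have := Finset.sum_le_sum_of_subset (f := C) (Finset.range_subset_range.2 h)
  omega

lemma tseq_succ (q : ℕ) : tseq C x y (q+1) = tseq C x y q + C q := by
  unfold tseq; rw [Finset.sum_range_succ]; ring

lemma Xproc_le (u : ℕ → ℝ) (q : ℕ) : Xproc C x y u q + y ≤ tseq C x y q := by
  induction q with
  | zero => simp [Xproc, tseq]
  | succ q ih =>
    rw [Xproc, tseq_succ]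
    split <;> omega

lemma Xproc_congr (u v : ℕ → ℝ) (q : ℕ) (h : ∀ i < q, u i = v i) :
    Xproc C x y u q = Xproc C x y v q := by
  induction q with
  | zero => rfl
  | succ q ih =>
    have hq : ∀ i < q, u i = v i := fun i hi => h i (Nat.lt_succ_of_lt hi)
    rw [Xproc, Xproc, ih hq, h q (Nat.lt_succ_self q)]

lemma measurable_XprocFin (r q : ℕ) : Measurable (fun ω : Fin r → ℝ => XprocFin C x y ω q) := by
  induction q with
  | zero => exact measurable_const
  | succ q ih =>
    unfold XprocFin at ih ⊢
    simp only [Xproc]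
    refine ih.add (Measurable.ite ?_ measurable_const measurable_const)
    have h1 : Measurable (fun ω : Fin r → ℝ => if h : q < r then ω ⟨q, h⟩ else 0) := by
      split
      · exact measurable_pi_apply _
      · exact measurable_const
    have h2 : Measurable (fun ω : Fin r → ℝ =>
        (Xproc C x y (fun i => if h : i < r then ω ⟨i, h⟩ else 0) q : ℝ) / (tseq C x y q : ℝ)) :=
      ((measurable_from_top.comp ih).div measurable_const)
    exact measurableSet_lt h1 h2

lemma measurable_exp_X (r q : ℕ) (l : ℝ) :
    Measurable (fun ω : Fin r → ℝ => Real.exp (l * (XprocFin C x y ω q : ℝ))) :=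
  Real.continuous_exp.measurable.comp
    (measurable_const.mul (measurable_from_top.comp (measurable_XprocFin C x y r q)))

lemma integrable_exp_X (r q : ℕ) (l : ℝ) (hl : 0 ≤ l) :
    Integrable (fun ω : Fin r → ℝ => Real.exp (l * (XprocFin C x y ω q : ℝ)))
      (procMeasure r) := by
  refine Integrable.mono' (integrable_const (Real.exp (l * (tseq C x y q : ℝ))))
    (measurable_exp_X C x y r q l).aestronglyMeasurable (ae_of_all _ fun ω => ?_)
  rw [Real.norm_eq_abs, abs_of_pos (Real.exp_pos _)]
  apply Real.exp_le_exp.2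
  apply mul_le_mul_of_nonneg_left _ hl
  have h := Xproc_le C x y (fun i => if h : i < r then ω ⟨i, h⟩ else 0) q
  unfold XprocFin
  have : Xproc C x y (fun i => if h : i < r then ω ⟨i, h⟩ else 0) q ≤ tseq C x y q := by omega
  exact_mod_cast this


lemma XprocFin_snoc (m : ℕ) (u : ℝ) (ω : Fin m → ℝ) :
    XprocFin C x y ((Fin.last m).insertNth u ω) (m+1) =
      XprocFin C x y ω m +
        (if u < (XprocFin C x y ω m : ℝ) / (tseq C x y m : ℝ) then C m else 0) := by
  unfold XprocFin
  rw [Xproc]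
  have hcong : Xproc C x y
        (fun i => if h : i < m+1 then Fin.insertNth (α := fun _ => ℝ) (Fin.last m) u ω ⟨i,h⟩ else 0) m
      = Xproc C x y (fun i => if h : i < m then ω ⟨i,h⟩ else 0) m := by
    apply Xproc_congr
    intro i hi
    rw [dif_pos (by omega : i < m+1), dif_pos hi]
    have h2 : (⟨i, by omega⟩ : Fin (m+1)) = (Fin.last m).succAbove ⟨i, hi⟩ := by
      rw [Fin.succAbove_last]
      rfl
    rw [h2, Fin.insertNth_apply_succAbove]
  simp only [hcong]
  congr 2
  rw [dif_pos (Nat.lt_succ_self m)]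
  have h3 : (⟨m, Nat.lt_succ_self m⟩ : Fin (m+1)) = Fin.last m := rfl
  rw [h3, Fin.insertNth_apply_same]

lemma step_est (lp lm tm cm Xm : ℝ) (hlp : 0 < lp) (htm : 0 < tm) (hXm : 0 ≤ Xm)
    (hXle : Xm ≤ tm) (hcm : 0 ≤ cm)
    (hrec : lm = lp + (Real.exp (lp*cm) - 1)/tm) :
    (Xm/tm) * Real.exp (lp*(Xm+cm)) + (1 - Xm/tm) * Real.exp (lp*Xm) ≤ Real.exp (lm*Xm) := by
  set p := Xm/tm with hp
  set E := Real.exp (lp*cm) with hE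
  have hE1 : 1 ≤ E := Real.one_le_exp (by positivity)
  have hp0 : 0 ≤ p := by positivity
  have hlhs : (Xm/tm) * Real.exp (lp*(Xm+cm)) + (1 - p) * Real.exp (lp*Xm)
      = Real.exp (lp*Xm) * (1 + p*(E-1)) := by
    rw [hE, show lp*(Xm+cm) = lp*Xm + lp*cm by ring, Real.exp_add]
    ring
  rw [hlhs]
  have h1p : 1 + p*(E-1) ≤ Real.exp (p*(E-1)) := by
    linarith [Real.add_one_le_exp (p*(E-1))]
  calc Real.exp (lp*Xm) * (1 + p*(E-1)) ≤ Real.exp (lp*Xm) * Real.exp (p*(E-1)) :=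
        mul_le_mul_of_nonneg_left h1p (Real.exp_pos _).le
    _ = Real.exp (lp*Xm + p*(E-1)) := (Real.exp_add _ _).symm
    _ = Real.exp (lm*Xm) := by
        congr 1
        rw [hrec, hp]
        field_simp

lemma unif_Iio (p : ℝ) (h0 : 0 ≤ p) (h1 : p ≤ 1) : unif (Set.Iio p) = ENNReal.ofReal p := by
  rw [unif, Measure.restrict_apply measurableSet_Iio]
  have : Set.Iio p ∩ Set.Icc 0 1 = Set.Ico 0 p := by
    ext u
    simp only [Set.mem_inter_iff, Set.mem_Iio, Set.mem_Icc, Set.mem_Ico]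
    constructor
    · rintro ⟨h, h2, _⟩; exact ⟨h2, h⟩
    · rintro ⟨h2, h⟩; exact ⟨h, h2, le_trans h.le h1⟩
  rw [this, Real.volume_Ico, sub_zero]

lemma unif_integral_ite (p a b : ℝ) (h0 : 0 ≤ p) (h1 : p ≤ 1) :
    ∫ u, (if u < p then a else b) ∂unif = p * a + (1-p) * b := by
  have hfe : (fun u => if u < p then a else b) =
      fun u => Set.indicator (Set.Iio p) (fun _ => a - b) u + b := by
    funext u
    by_cases h : u < p
    · simp [Set.indicator, h]
    · simp [Set.indicator, h]
  rw [hfe]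
  rw [integral_add ((integrable_const (a-b)).indicator measurableSet_Iio) (integrable_const b)]
  rw [integral_indicator_const _ measurableSet_Iio, integral_const]
  rw [measureReal_def, measureReal_def, unif_Iio p h0 h1]
  simp [ENNReal.toReal_ofReal h0]
  ring

def lamseq (R : ℕ) (L : ℝ) : ℕ → ℝ
  | 0 => L
  | j + 1 => lamseq R L j +
      (Real.exp (lamseq R L j * C (R - 1 - j)) - 1) / (tseq C x y (R - 1 - j) : ℝ)

lemma lamseq_pos (R : ℕ) (L : ℝ) (hL : 0 < L) (j : ℕ) : 0 < lamseq C x y R L j := by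
  induction j with
  | zero => exact hL
  | succ j ih =>
    rw [lamseq]
    have h1 : (1:ℝ) ≤ Real.exp (lamseq C x y R L j * C (R - 1 - j)) := by
      rw [Real.one_le_exp_iff]; positivity
    have h2 : (0:ℝ) ≤ tseq C x y (R - 1 - j) := by positivity
    have := div_nonneg (by linarith : (0:ℝ) ≤ Real.exp (lamseq C x y R L j * C (R-1-j)) - 1) h2
    linarith


lemma exp_quadratic {v : ℝ} (h0 : 0 ≤ v) (h1 : v ≤ 1) : Real.exp v ≤ 1 + v + v^2 := by
  have h := Real.exp_bound (x := v) (by rw [abs_of_nonneg h0]; exact h1) (n := 2) (by norm_num)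
  rw [abs_of_nonneg h0] at h
  have h2 : ∑ m ∈ Finset.range 2, v ^ m / (m.factorial : ℝ) = 1 + v := by
    simp [Finset.sum_range_succ]
  rw [h2] at h
  have h3 := (abs_le.1 h).2
  norm_num [Nat.factorial] at h3
  nlinarith

lemma exp_tenth_le_two : Real.exp (1/10 : ℝ) ≤ 2 := by
  rw [show (2:ℝ) = Real.exp (Real.log 2) by rw [Real.exp_log]; norm_num]
  apply Real.exp_le_exp.2
  have := Real.log_two_gt_d9
  linarith

lemma lamseq_bound (R : ℕ) (hy : 1 ≤ y) (cc : ℕ) (hcc : 1 ≤ cc) (hC : ∀ q < R, C q ≤ cc) :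
    ∀ j ≤ R, lamseq C x y R (((y:ℝ)/(20*cc)) / (tseq C x y R : ℝ)) j * (tseq C x y (R - j) : ℝ) ≤
      ((y:ℝ)/(20*cc)) * Real.exp ((2*((y:ℝ)/(20*cc))*cc) *
        (1/(tseq C x y (R-j) : ℝ) - 1/(tseq C x y R : ℝ))) := by
  set Ar : ℝ := (y:ℝ)/(20*cc) with hAr
  set B : ℝ := 2*Ar*cc with hB
  have hccR : (1:ℝ) ≤ cc := by exact_mod_cast hcc
  have hyR : (1:ℝ) ≤ y := by exact_mod_cast hy
  have hArpos : 0 < Ar := by rw [hAr]; positivity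
  have hBpos : 0 < B := by rw [hB]; nlinarith
  have ht : ∀ q, (y:ℝ) ≤ (tseq C x y q : ℝ) := by
    intro q
    have : y ≤ tseq C x y q := by unfold tseq; omega
    exact_mod_cast this
  have htpos : ∀ q, (0:ℝ) < (tseq C x y q : ℝ) := fun q => lt_of_lt_of_le (by linarith) (ht q)
  set L : ℝ := Ar / (tseq C x y R : ℝ) with hLdef
  have hL : 0 < L := div_pos hArpos (htpos R)
  have hBy : B = (y:ℝ)/10 := by
    rw [hB, hAr]; field_simp; ring
  have hexp_le : ∀ a : ℕ, B * (1/(tseq C x y a : ℝ) - 1/(tseq C x y R : ℝ)) ≤ 1/10 := by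
    intro a
    have h1 : 1/(tseq C x y a : ℝ) ≤ 1/(y:ℝ) :=
      one_div_le_one_div_of_le (by linarith) (ht a)
    have h2 : 0 < 1/(tseq C x y R : ℝ) := one_div_pos.2 (htpos R)
    have h3 : B * (1/(tseq C x y a : ℝ)) ≤ B * (1/(y:ℝ)) := by nlinarith
    have h4 : B * (1/(y:ℝ)) = 1/10 := by
      rw [hBy]; field_simp
    nlinarith
  intro j hj
  induction j with
  | zero =>
    simp only [Nat.sub_zero, sub_self, mul_zero, Real.exp_zero, mul_one]
    rw [lamseq, hLdef, div_mul_cancel₀ _ (ne_of_gt (htpos R))]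
  | succ j ihj =>
    have hjR : j ≤ R := Nat.le_of_succ_le hj
    have ih := ihj hjR
    set g := lamseq C x y R L with hg
    have hgpos : 0 < g j := lamseq_pos C x y R L hL j
    have hunf0 : g (j+1) = g j + (Real.exp (g j * C (R-1-j)) - 1) / (tseq C x y (R-1-j) : ℝ) := by
      rw [hg]; rfl
    clear_value g
    set q : ℕ := R - 1 - j with hq
    have hq1 : R - j = q + 1 := by omega
    have hq2 : R - (j+1) = q := by omega
    have hqR : q < R := by omega
    clear_value q
    rw [hq1] at ih
    rw [hq2]
    set tq : ℝ := (tseq C x y q : ℝ) with htq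
    set tq1 : ℝ := (tseq C x y (q+1) : ℝ) with htq1
    set tR : ℝ := (tseq C x y R : ℝ) with htR
    have htq_pos : 0 < tq := htpos q
    have htq1_pos : 0 < tq1 := htpos (q+1)
    have htR_pos : 0 < tR := htpos R
    have hsucc : tq1 = tq + C q := by
      rw [htq1, htq]; exact_mod_cast tseq_succ C x y q
    have hCq : (C q : ℝ) ≤ cc := by exact_mod_cast hC q hqR
    have hCq0 : (0:ℝ) ≤ C q := Nat.cast_nonneg _
    have htq1R : tq1 ≤ tR := by
      rw [htq1, htR]; exact_mod_cast tseq_mono C x y (by omega : q + 1 ≤ R)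
    have hyq1 : (y:ℝ) ≤ tq1 := ht (q+1)
    have hyq : (y:ℝ) ≤ tq := ht q
    have hexple1 : B * (1/tq1 - 1/tR) ≤ 1/10 := hexp_le (q+1)
    have hexpleA : B * (1/tq1 - 1/tR) + B * (1/tq - 1/tq1) = B * (1/tq - 1/tR) := by ring
    clear_value tq tq1 tR
    clear ihj hexp_le ht htpos hC hj hq hq1 hq2 hqR hg hLdef hL
    have hIH2 : g j * tq1 ≤ 2 * Ar := by
      have h1 : Real.exp (B * (1/tq1 - 1/tR)) ≤ 2 :=
        le_trans (Real.exp_le_exp.2 hexple1) exp_tenth_le_two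
      calc g j * tq1 ≤ Ar * Real.exp (B * (1/tq1 - 1/tR)) := ih
        _ ≤ Ar * 2 := mul_le_mul_of_nonneg_left h1 hArpos.le
        _ = 2 * Ar := by ring
    set v : ℝ := g j * C q with hv
    clear_value v
    have hv0 : 0 ≤ v := hv ▸ mul_nonneg hgpos.le hCq0
    have hccR0 : (0:ℝ) ≤ cc := by linarith
    have hy0 : (0:ℝ) < y := by linarith
    have hv110 : v ≤ 1/10 := by
      have h1 : (C q:ℝ) * y ≤ (cc:ℝ) * tq1 :=
        calc (C q:ℝ) * y ≤ (cc:ℝ) * y := mul_le_mul_of_nonneg_right hCq hy0.le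
          _ ≤ (cc:ℝ) * tq1 := mul_le_mul_of_nonneg_left hyq1 hccR0
      have h2 : v * y ≤ (g j * tq1) * cc := by
        rw [hv, mul_assoc]
        calc g j * ((C q:ℝ) * y) ≤ g j * ((cc:ℝ) * tq1) :=
              mul_le_mul_of_nonneg_left h1 hgpos.le
          _ = (g j * tq1) * cc := by ring
      have h3 : (g j * tq1) * cc ≤ 2 * Ar * cc := mul_le_mul_of_nonneg_right hIH2 hccR0
      have h4 : v * y ≤ (1/10) * y := by
        rw [← hB, hBy] at h3
        linarith
      exact le_of_mul_le_mul_right h4 hy0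
    have hexpv : Real.exp v ≤ 1 + v + v^2 := exp_quadratic hv0 (by linarith)
    have hkey : g (j+1) * tq = g j * tq + (Real.exp v - 1) := by
      rw [hunf0, add_mul, div_mul_cancel₀ _ (ne_of_gt htq_pos)]
    have hsplit : g j * tq1 = g j * tq + v := by
      rw [hsucc, hv]; ring
    have h6 : g (j+1) * tq ≤ g j * tq1 + v^2 := by
      rw [hkey, hsplit]; linarith
    set d : ℝ := 1/tq - 1/tq1 with hd
    have hd_eq : (C q:ℝ) = tq * tq1 * d := by
      have e : tq * tq1 * d = tq1 - tq := by
        rw [hd]; field_simp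
      rw [e]; linarith [hsucc]
    have hd0 : 0 ≤ d := by
      rw [hd]
      have h1 : tq ≤ tq1 := by linarith [hsucc]
      have := one_div_le_one_div_of_le htq_pos h1
      linarith
    have hgtq : g j * tq ≤ 2 * Ar := by
      have h1 : tq ≤ tq1 := by linarith [hsucc]
      calc g j * tq ≤ g j * tq1 := mul_le_mul_of_nonneg_left h1 hgpos.le
        _ ≤ 2 * Ar := hIH2
    have h8 : (0:ℝ) ≤ g j * tq1 := mul_nonneg hgpos.le htq1_pos.le
    have hv2 : v^2 ≤ (g j * tq1) * (B * d) := by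
      have e1 : v^2 = (g j * tq1) * ((g j * tq) * ((C q:ℝ) * d)) := by
        rw [hv, hd_eq]; ring
      rw [e1]
      refine mul_le_mul_of_nonneg_left ?_ h8
      have h7 : (C q:ℝ) * d ≤ (cc:ℝ) * d := mul_le_mul_of_nonneg_right hCq hd0
      calc (g j * tq) * ((C q:ℝ) * d) ≤ (2*Ar) * ((cc:ℝ) * d) :=
            mul_le_mul hgtq h7 (mul_nonneg hCq0 hd0) (by positivity)
        _ = B * d := by rw [hB]; ring
    have hfinal : g (j+1) * tq ≤ (g j * tq1) * (1 + B * d) := by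
      have e2 : (g j * tq1) * (1 + B*d) = g j * tq1 + (g j * tq1) * (B*d) := by ring
      linarith
    have hBd : (1 + B*d) ≤ Real.exp (B*d) := by linarith [Real.add_one_le_exp (B*d)]
    calc g (j+1) * tq ≤ (g j * tq1) * Real.exp (B*d) :=
          le_trans hfinal (mul_le_mul_of_nonneg_left hBd h8)
      _ ≤ (Ar * Real.exp (B * (1/tq1 - 1/tR))) * Real.exp (B*d) :=
          mul_le_mul_of_nonneg_right ih (Real.exp_pos _).le
      _ = Ar * Real.exp (B * (1/tq - 1/tR)) := by
          rw [mul_assoc, ← Real.exp_add]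
          congr 1
          rw [hd]; ring

lemma integral_exp_le (R : ℕ) (L : ℝ) (hL : 0 < L) (hy : 1 ≤ y) :
    ∀ m, m ≤ R →
    (∫ ω, Real.exp (lamseq C x y R L (R - m) * (XprocFin C x y ω m : ℝ)) ∂(procMeasure m))
      ≤ Real.exp (lamseq C x y R L R * x) := by
  intro m
  induction m with
  | zero =>
    intro _
    have h0 : ∀ ω : Fin 0 → ℝ, XprocFin C x y ω 0 = x := fun _ => rfl
    simp only [Nat.sub_zero, h0, integral_const, measureReal_def, measure_univ, ENNReal.toReal_one, smul_eq_mul,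
      one_mul]
    exact le_refl _
  | succ m ih =>
    intro hm1
    have hm : m ≤ R := Nat.le_of_succ_le hm1
    have hRm : R - m = (R - (m+1)) + 1 := by omega
    have hm_eq : R - 1 - (R - (m+1)) = m := by omega
    set lp : ℝ := lamseq C x y R L (R - (m+1)) with hlp_def
    set lm : ℝ := lamseq C x y R L (R - m) with hlm_def
    have hlp : 0 < lp := lamseq_pos C x y R L hL _
    have hlm : 0 < lm := lamseq_pos C x y R L hL _
    have hrec : lm = lp + (Real.exp (lp * C m) - 1)/(tseq C x y m : ℝ) := by
      rw [hlm_def, hRm, lamseq, hm_eq, ← hlp_def]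
    -- decompose the measure
    have hmp := measurePreserving_piFinSuccAbove (fun _ : Fin (m+1) => unif) (Fin.last m)
    set F : (Fin (m+1) → ℝ) → ℝ :=
      fun ω => Real.exp (lp * (XprocFin C x y ω (m+1) : ℝ)) with hF
    have hFmeas : Measurable F := measurable_exp_X C x y (m+1) (m+1) lp
    set e := MeasurableEquiv.piFinSuccAbove (fun _ : Fin (m+1) => ℝ) (Fin.last m) with he
    have hcomp : ∫ ω, F ω ∂(procMeasure (m+1))
        = ∫ z, F (e.symm z) ∂(unif.prod (procMeasure m)) :=
      ((hmp.symm e).integral_comp e.symm.measurableEmbedding F).symm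
    -- integrability on the product
    have hsub : ∀ ω : Fin (m+1) → ℝ, (XprocFin C x y ω (m+1) : ℝ) ≤ (tseq C x y (m+1) : ℝ) := by
      intro ω
      have h := Xproc_le C x y (fun i => if h : i < (m+1) then ω ⟨i, h⟩ else 0) (m+1)
      unfold XprocFin
      have : Xproc C x y (fun i => if h : i < (m+1) then ω ⟨i, h⟩ else 0) (m+1) ≤ tseq C x y (m+1) := by omega
      exact_mod_cast this
    have hint : Integrable (fun z : ℝ × (Fin m → ℝ) => F (e.symm z)) ((unif).prod (procMeasure m)) := by
      refine Integrable.mono' (integrable_const (Real.exp (lp * (tseq C x y (m+1) : ℝ))))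
        ((hFmeas.comp e.symm.measurable).aestronglyMeasurable) (ae_of_all _ fun z => ?_)
      rw [Real.norm_eq_abs, abs_of_pos (Real.exp_pos _)]
      exact Real.exp_le_exp.2 (mul_le_mul_of_nonneg_left (hsub _) hlp.le)
    have hXle : ∀ ω : Fin m → ℝ, (XprocFin C x y ω m : ℝ) ≤ (tseq C x y m : ℝ) := by
      intro ω
      have h := Xproc_le C x y (fun i => if h : i < m then ω ⟨i, h⟩ else 0) m
      unfold XprocFin
      have : Xproc C x y (fun i => if h : i < m then ω ⟨i, h⟩ else 0) m ≤ tseq C x y m := by omega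
      exact_mod_cast this
    have htm : (0:ℝ) < (tseq C x y m : ℝ) := by
      have : 1 ≤ tseq C x y m := by unfold tseq; omega
      exact_mod_cast Nat.lt_of_lt_of_le Nat.zero_lt_one this
    have hsymm : ∀ (u : ℝ) (ω : Fin m → ℝ), e.symm (u, ω) = (Fin.last m).insertNth u ω := by
      intro u ω
      rw [he, MeasurableEquiv.piFinSuccAbove_symm_apply]
      simp [Fin.insertNthEquiv]
    have h2 := integral_prod_symm (fun z : ℝ × (Fin m → ℝ) => F (e.symm z)) hint
    rw [hcomp, h2]
    have inner_le : ∀ ω : Fin m → ℝ,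
        (∫ u, F (e.symm (u, ω)) ∂unif) ≤ Real.exp (lm * (XprocFin C x y ω m : ℝ)) := by
      intro ω
      set Xm : ℝ := (XprocFin C x y ω m : ℝ) with hXm_def
      have hXm0 : 0 ≤ Xm := by rw [hXm_def]; positivity
      set p : ℝ := Xm / (tseq C x y m : ℝ) with hp_def
      have hp0 : 0 ≤ p := by rw [hp_def]; positivity
      have hp1 : p ≤ 1 := by rw [hp_def]; exact div_le_one_of_le₀ (hXle ω) htm.le
      have heq : ∀ u : ℝ, F (e.symm (u, ω)) =
          if u < p then Real.exp (lp * (Xm + (C m : ℝ))) else Real.exp (lp * Xm) := by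
        intro u
        rw [hF]
        simp only [hsymm u ω, XprocFin_snoc]
        push_cast
        rw [← hXm_def, ← hp_def]
        split_ifs with h
        · rfl
        · norm_num
      simp only [heq]
      rw [unif_integral_ite p _ _ hp0 hp1]
      exact step_est lp lm (tseq C x y m : ℝ) (C m : ℝ) Xm hlp htm hXm0 (hXle ω)
        (Nat.cast_nonneg _) hrec
    refine le_trans (integral_mono_of_nonneg (ae_of_all _ fun ω => ?_)
      (integrable_exp_X C x y m m lm hlm.le) (ae_of_all _ inner_le)) (ih hm)
    exact integral_nonneg fun u => (Real.exp_pos _).le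


lemma key_bound (R : ℕ) (hx : 1 ≤ x) (hy : 1 ≤ y) (cc : ℕ) (hcc : 1 ≤ cc)
    (hC : ∀ q < R, C q ≤ cc) :
    1 - Real.exp (-(x:ℝ)/(20*(cc:ℝ))) ≤
      (procMeasure R {ω | (XprocFin C x y ω R : ℝ) ≤
        4 * (x:ℝ) * (tseq C x y R : ℝ) / (y:ℝ)}).toReal := by
  have hccR : (1:ℝ) ≤ cc := by exact_mod_cast hcc
  have hyR : (1:ℝ) ≤ y := by exact_mod_cast hy
  have hxR : (1:ℝ) ≤ x := by exact_mod_cast hx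
  have ht : ∀ q, (y:ℝ) ≤ (tseq C x y q : ℝ) := by
    intro q
    have : y ≤ tseq C x y q := by unfold tseq; omega
    exact_mod_cast this
  have htpos : ∀ q, (0:ℝ) < (tseq C x y q : ℝ) := fun q => lt_of_lt_of_le (by linarith) (ht q)
  set tR : ℝ := (tseq C x y R : ℝ) with htR
  set t0 : ℝ := (tseq C x y 0 : ℝ) with ht0
  have htR_pos : 0 < tR := htpos R
  have ht0_pos : 0 < t0 := htpos 0
  have hyt0 : (y:ℝ) ≤ t0 := ht 0
  set Ar : ℝ := (y:ℝ)/(20*cc) with hAr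
  have hArpos : 0 < Ar := by rw [hAr]; positivity
  set L : ℝ := Ar / tR with hL_def
  have hL : 0 < L := div_pos hArpos htR_pos
  set a : ℝ := 4 * (x:ℝ) * tR / (y:ℝ) with ha
  -- the exponential moment bound at the end of the process
  have hmoment := integral_exp_le C x y R L hL hy R (le_refl R)
  rw [Nat.sub_self] at hmoment
  have hlam0 : lamseq C x y R L 0 = L := rfl
  rw [hlam0] at hmoment
  -- the rate bound
  have hgR := lamseq_bound C x y R hy cc hcc hC R (le_refl R)
  rw [Nat.sub_self] at hgR
  set gR : ℝ := lamseq C x y R L R with hgR_def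
  have hgR_pos : 0 < gR := lamseq_pos C x y R L hL R
  have hexp110 : (2*Ar*(cc:ℝ)) * (1/t0 - 1/tR) ≤ 1/10 := by
    have h1 : 1/t0 ≤ 1/(y:ℝ) := one_div_le_one_div_of_le (by linarith) hyt0
    have h2 : 0 < 1/tR := by positivity
    have hBpos : 0 < 2*Ar*(cc:ℝ) := by positivity
    have h3 : (2*Ar*(cc:ℝ)) * (1/t0 - 1/tR) ≤ (2*Ar*(cc:ℝ)) * (1/(y:ℝ)) := by nlinarith
    have h4 : (2*Ar*(cc:ℝ)) * (1/(y:ℝ)) = 1/10 := by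
      rw [hAr]; field_simp; ring
    linarith
  have hgRt0 : gR * t0 ≤ 2 * Ar := by
    have h5 : Real.exp ((2*Ar*(cc:ℝ)) * (1/t0 - 1/tR)) ≤ 2 :=
      le_trans (Real.exp_le_exp.2 hexp110) exp_tenth_le_two
    calc gR * t0 ≤ Ar * Real.exp ((2*Ar*(cc:ℝ)) * (1/t0 - 1/tR)) := hgR
      _ ≤ Ar * 2 := mul_le_mul_of_nonneg_left h5 hArpos.le
      _ = 2 * Ar := by ring
  -- exponent estimate : gR * x - L * a ≤ - x/(20 cc)
  have hexponent : gR * (x:ℝ) - L * a ≤ -(x:ℝ)/(20*(cc:ℝ)) := by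
    have hLa : L * a = 4 * Ar * (x:ℝ) / (y:ℝ) := by
      rw [hL_def, ha]; field_simp
    have hgx : gR * (x:ℝ) ≤ 2 * Ar * (x:ℝ) / (y:ℝ) := by
      have h1 : gR * (x:ℝ) * (y:ℝ) ≤ gR * (x:ℝ) * t0 :=
        mul_le_mul_of_nonneg_left hyt0 (mul_nonneg hgR_pos.le (Nat.cast_nonneg x))
      have h2 : gR * (x:ℝ) * t0 = (gR * t0) * (x:ℝ) := by ring
      have h3 : (gR * t0) * (x:ℝ) ≤ 2 * Ar * (x:ℝ) :=
        mul_le_mul_of_nonneg_right hgRt0 (Nat.cast_nonneg x)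
      have h4 : gR * (x:ℝ) * (y:ℝ) ≤ 2 * Ar * (x:ℝ) := by linarith
      rw [div_eq_mul_inv]
      have hy0 : (0:ℝ) < y := by linarith
      calc gR * (x:ℝ) = gR * (x:ℝ) * (y:ℝ) * (y:ℝ)⁻¹ := by field_simp
        _ ≤ 2 * Ar * (x:ℝ) * (y:ℝ)⁻¹ := by
            apply mul_le_mul_of_nonneg_right h4 (by positivity)
    have hArxy : Ar * (x:ℝ) / (y:ℝ) = (x:ℝ)/(20*(cc:ℝ)) := by
      rw [hAr]; field_simp
    have h6 : gR * (x:ℝ) - L * a ≤ -2 * (Ar * (x:ℝ) / (y:ℝ)) := by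
      rw [hLa]
      have e1 : (4:ℝ) * Ar * (x:ℝ) / (y:ℝ) = 4 * (Ar * (x:ℝ)/(y:ℝ)) := by ring
      have e2 : (2:ℝ) * Ar * (x:ℝ) / (y:ℝ) = 2 * (Ar * (x:ℝ)/(y:ℝ)) := by ring
      rw [e1]
      rw [e2] at hgx
      linarith
    rw [hArxy] at h6
    have h7 : (0:ℝ) ≤ (x:ℝ)/(20*(cc:ℝ)) := by positivity
    have e3 : -(x:ℝ)/(20*(cc:ℝ)) = -((x:ℝ)/(20*(cc:ℝ))) := by ring
    rw [e3]
    linarith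
  -- Markov
  set f : (Fin R → ℝ) → ℝ := fun ω => Real.exp (L * (XprocFin C x y ω R : ℝ)) with hf
  set ε : ℝ := Real.exp (L * a) with hε
  have hεpos : 0 < ε := Real.exp_pos _
  have hmarkov := mul_meas_ge_le_integral_of_nonneg
    (ae_of_all _ fun ω => (Real.exp_pos _).le)
    (integrable_exp_X C x y R R L hL.le) ε
  set S : Set (Fin R → ℝ) := {ω | (XprocFin C x y ω R : ℝ) ≤ a} with hS
  have hSmeas : MeasurableSet S :=
    measurableSet_le (measurable_from_top.comp (measurable_XprocFin C x y R R)) measurable_const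
  have hsub : Sᶜ ⊆ {ω | ε ≤ f ω} := by
    intro ω hω
    simp only [hS, Set.mem_compl_iff, Set.mem_setOf_eq, not_le] at hω
    simp only [Set.mem_setOf_eq, hε, hf]
    exact Real.exp_le_exp.2 (mul_le_mul_of_nonneg_left hω.le hL.le)
  have hcompl : (procMeasure R Sᶜ).toReal ≤ Real.exp (-(x:ℝ)/(20*(cc:ℝ))) := by
    have h1 : (procMeasure R Sᶜ).toReal ≤ (procMeasure R {ω | ε ≤ f ω}).toReal :=
      ENNReal.toReal_mono (measure_ne_top _ _) (measure_mono hsub)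
    have h2 : ε * (procMeasure R {ω | ε ≤ f ω}).toReal ≤ Real.exp (gR * (x:ℝ)) :=
      le_trans hmarkov hmoment
    have h3 : (procMeasure R {ω | ε ≤ f ω}).toReal ≤ Real.exp (gR * (x:ℝ)) / ε := by
      rw [le_div_iff₀ hεpos]; linarith [h2]
    have h4 : Real.exp (gR * (x:ℝ)) / ε = Real.exp (gR * (x:ℝ) - L * a) := by
      rw [hε, Real.exp_sub]
    calc (procMeasure R Sᶜ).toReal ≤ Real.exp (gR * (x:ℝ)) / ε := le_trans h1 h3
      _ = Real.exp (gR * (x:ℝ) - L * a) := h4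
      _ ≤ Real.exp (-(x:ℝ)/(20*(cc:ℝ))) := Real.exp_le_exp.2 hexponent
  have hadd : (procMeasure R S).toReal + (procMeasure R Sᶜ).toReal = 1 := by
    rw [← ENNReal.toReal_add (measure_ne_top _ _) (measure_ne_top _ _),
      measure_add_measure_compl hSmeas, measure_univ, ENNReal.toReal_one]
  have : 1 - Real.exp (-(x:ℝ)/(20*(cc:ℝ))) ≤ (procMeasure R S).toReal := by linarith
  exact this


end


/-- **Lemma (end of the `(𝒞,x,y)`-process).** Suppose `c, x ≪ y`. Then at the end of the
`(𝒞,x,y)`-process, with probability at least `1 − exp(−x/(20c))`, `X(t_r) = O(x t_r / y)`. -/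
theorem cxy_process_end (r : ℕ → ℕ) (c : ℕ → ℕ → ℕ) (x y : ℕ → ℕ)
    (hc : (fun n => (((Finset.range (r n)).sup (c n) : ℕ) : ℝ)) =o[atTop]
      fun n => (y n : ℝ))
    (hx : (fun n => (x n : ℝ)) =o[atTop] fun n => (y n : ℝ)) :
    ∃ K : ℝ, 0 < K ∧ ∀ᶠ n in atTop,
      1 - Real.exp (-(x n : ℝ) / (20 * (((Finset.range (r n)).sup (c n) : ℕ) : ℝ))) ≤
        (procMeasure (r n) {ω | (XprocFin (c n) (x n) (y n) ω (r n) : ℝ) ≤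
          K * (x n : ℝ) * (tseq (c n) (x n) (y n) (r n) : ℝ) / (y n : ℝ)}).toReal := by
  refine ⟨4, by norm_num, ?_⟩
  filter_upwards [hx.def (by norm_num : (0:ℝ) < 1/2)] with n hn
  by_cases hx0 : x n = 0
  · rw [hx0]
    simp only [Nat.cast_zero, neg_zero, zero_div, Real.exp_zero, sub_self]
    exact ENNReal.toReal_nonneg
  by_cases hc0 : (Finset.range (r n)).sup (c n) = 0
  · rw [hc0]
    simp only [Nat.cast_zero, mul_zero, div_zero, Real.exp_zero, sub_self]
    exact ENNReal.toReal_nonneg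
  · have hx1 : 1 ≤ x n := Nat.one_le_iff_ne_zero.2 hx0
    have hy1 : 1 ≤ y n := by
      have h1 : (1:ℝ) ≤ (x n : ℝ) := by exact_mod_cast hx1
      rw [Real.norm_eq_abs, Real.norm_eq_abs, abs_of_nonneg (Nat.cast_nonneg _),
        abs_of_nonneg (Nat.cast_nonneg _)] at hn
      have : (1:ℝ) ≤ (y n : ℝ) := by linarith
      exact_mod_cast this
    exact key_bound (c n) (x n) (y n) (r n) hx1 hy1 ((Finset.range (r n)).sup (c n))
      (Nat.one_le_iff_ne_zero.2 hc0) (fun q hq => Finset.le_sup (Finset.mem_range.2 hq))
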